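/- Let G be a finite group and p a prime dividing |Z(G) ∩ G'|. Then a Sylow p-subgroup of G is non-abelian. -/

import Mathlib

theorem stmt_13 (G : Type*) [Group G] [Finite G] (p : ℕ) (hp : p.Prime)
    (hdvd : p ∣ Nat.card (↥(Subgroup.center G ⊓ commutator G)))
    (P : Sylow p G) :
    ¬ IsMulCommutative ↥(P : Subgroup G) := by
  intro hcomm
  haveI : Fact p.Prime := ⟨hp⟩
  haveI := Fintype.ofFinite (↥(Subgroup.center G ⊓ commutator G))
  rw [Nat.card_eq_fintype_card] at hdvd
  -- Cauchy: get element of order p in center ⊓ commutator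
  obtain ⟨⟨g, hgZ, hgC⟩, hg⟩ := exists_prime_orderOf_dvd_card p hdvd
  replace hg : orderOf g = p := by rw [← hg, ← orderOf_submonoid]
  -- g lies in P because it is central of p-power order
  have hgP : g ∈ (P : Subgroup G) := by
    have hpg : IsPGroup p (Subgroup.zpowers g) :=
      IsPGroup.of_card (by rw [Nat.card_zpowers, hg, pow_one])
    have hle : Subgroup.zpowers g ≤ Subgroup.normalizer (P : Set G) :=
      le_trans (Subgroup.zpowers_le.mpr hgZ) (Subgroup.center_le_normalizer _)
    have h2 := hpg.inf_normalizer_sylow P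
    rw [inf_eq_left.mpr hle] at h2
    exact (le_of_eq h2).trans inf_le_right (Subgroup.mem_zpowers g)
  -- transfer homomorphism to the abelian group P
  letI : CommGroup (P : Subgroup G) := { (inferInstance : Group (P : Subgroup G)) with mul_comm := mul_comm' }
  let ϕ : G →* (P : Subgroup G) := MonoidHom.transfer (MonoidHom.id (P : Subgroup G))
  have key : ∀ (k : ℕ) (g₀ : G), g₀⁻¹ * g ^ k * g₀ ∈ (P : Subgroup G) →
      g₀⁻¹ * g ^ k * g₀ = g ^ k := by
    intro k g₀ _
    have : g ^ k ∈ Subgroup.center G := Subgroup.pow_mem _ hgZ k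
    rw [Subgroup.mem_center_iff.mp this g₀⁻¹, mul_assoc, inv_mul_cancel, mul_one]
  have htrans : ϕ g = ⟨g ^ (P : Subgroup G).index,
      MonoidHom.transfer_eq_pow_aux g key⟩ :=
    MonoidHom.transfer_eq_pow _ g key
  -- commutator subgroup is in the kernel since the target is abelian
  have hker : ϕ g = 1 := Abelianization.commutator_subset_ker ϕ hgC
  rw [htrans] at hker
  have hpow : g ^ (P : Subgroup G).index = 1 := by
    simpa [Subtype.ext_iff] using hker
  have : orderOf g ∣ (P : Subgroup G).index := orderOf_dvd_of_pow_eq_one hpow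
  rw [hg] at this
  exact P.not_dvd_index this
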